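/- Let G be a group, I ⊴ G a normal subgroup with G/I cyclic (topologically) generated by σ, and A a G-module. The composite of the inflation map from H¹(G/I, A^I) with restriction, together with the exactness of inflation-restriction, implies: the kernel of the natural map H¹(G, A[p])/H¹_nr(G, A[p]) → H¹(G, A)[p]/H¹_nr(G, A)[p] injects into ker( H¹(I, A[p])^{G/I} → H¹(I, A)^{G/I}[p] ), which (when I acts on A through a p-divisible quotient as in the Kummer sequence) is isomorphic to (H⁰(I, A)/p·H⁰(I, A))^{G/I}. -/

import Mathlib

set_option linter.unnecessarySimpa false

section

variable (G : Type*) [Group G] (A : Type*) [AddCommGroup A] [DistribMulAction G A]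

/-- 1-cocycles of `G` with values in the `G`-module `A`. -/
def Z1 : AddSubgroup (G → A) where
  carrier := {f | ∀ g h : G, f (g * h) = f g + g • f h}
  zero_mem' := by intro g h; simp
  add_mem' := by
    intro f₁ f₂ h₁ h₂ g h
    simp only [Pi.add_apply, h₁ g h, h₂ g h, smul_add]
    abel
  neg_mem' := by
    intro f hf g h
    simp only [Pi.neg_apply, hf g h, smul_neg]
    abel

/-- 1-coboundaries of `G` with values in `A`. -/
def B1 : AddSubgroup (G → A) where
  carrier := {f | ∃ a : A, ∀ g : G, f g = g • a - a}
  zero_mem' := ⟨0, by simp⟩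
  add_mem' := by
    rintro f₁ f₂ ⟨a, ha⟩ ⟨b, hb⟩
    refine ⟨a + b, fun g => ?_⟩
    simp only [Pi.add_apply, ha g, hb g, smul_add]
    abel
  neg_mem' := by
    rintro f ⟨a, ha⟩
    refine ⟨-a, fun g => ?_⟩
    simp only [Pi.neg_apply, ha g, smul_neg]
    abel

/-- First group cohomology `H¹(G, A) = Z¹/B¹`. -/
abbrev H1 := Z1 G A ⧸ ((B1 G A).addSubgroupOf (Z1 G A))

variable {A} {B : Type*} [AddCommGroup B] [DistribMulAction G B]

/-- The map on 1-cocycles induced by an equivariant homomorphism `A →+ B`. -/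
def Z1map (φ : A →+ B) (hφ : ∀ (g : G) (a : A), φ (g • a) = g • φ a) :
    Z1 G A →+ Z1 G B where
  toFun f := ⟨φ ∘ (f : G → A), by
    intro g h
    have hf := f.2 g h
    simp only [Function.comp_apply, hf, map_add, hφ]⟩
  map_zero' := by ext g; simp
  map_add' f₁ f₂ := by ext g; simp

/-- The map on `H¹` induced by an equivariant homomorphism `A →+ B`. -/
def H1map (φ : A →+ B) (hφ : ∀ (g : G) (a : A), φ (g • a) = g • φ a) :
    H1 G A →+ H1 G B :=
  QuotientAddGroup.map _ _ (Z1map G φ hφ) (by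
    rintro ⟨f, hf⟩ hmem
    rcases hmem with ⟨a, ha⟩
    exact ⟨φ a, fun g => by
      have := ha g
      try simp only [AddSubgroup.coe_subtype] at this
      simp [Z1map, this, hφ, map_sub]⟩)

variable (A)

/-- The `p`-torsion subgroup `A[p]`. -/
def ptors (p : ℕ) : AddSubgroup A where
  carrier := {a | p • a = 0}
  zero_mem' := by simp
  add_mem' := by
    intro a b ha hb
    show p • (a + b) = 0
    rw [smul_add]; simp only [Set.mem_setOf_eq] at ha hb; rw [ha, hb, add_zero]
  neg_mem' := by
    intro a ha
    show p • (-a) = 0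
    simp only [Set.mem_setOf_eq] at ha; rw [smul_neg, ha, neg_zero]

/-- `A[p]` is a `G`-submodule. -/
instance (p : ℕ) : DistribMulAction G (ptors A p) where
  smul g a := ⟨g • (a : A), by
    show p • (g • (a : A)) = 0
    have h := (DistribMulAction.toAddMonoidHom A g).map_nsmul p (a : A)
    have ha : p • (a : A) = 0 := a.2
    simpa [ha] using h.symm⟩
  one_smul a := Subtype.ext (one_smul G (a : A))
  mul_smul g h a := Subtype.ext (mul_smul g h (a : A))
  smul_zero g := Subtype.ext (smul_zero g)
  smul_add g a b := Subtype.ext (smul_add g (a : A) (b : A))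

/-- The invariants `H⁰(G, A) = A^G`. -/
def fixedSub : AddSubgroup A where
  carrier := {a | ∀ g : G, g • a = a}
  zero_mem' := by intro g; simp
  add_mem' := by intro a b ha hb g; rw [smul_add, ha g, hb g]
  neg_mem' := by intro a ha g; rw [smul_neg, ha g]

/-- The subgroup `p·H⁰(G, A)` of `H⁰(G, A)`. -/
def pMulFixed (p : ℕ) : AddSubgroup (fixedSub G A) where
  carrier := {x | ∃ y : fixedSub G A, p • y = x}
  zero_mem' := ⟨0, by simp⟩
  add_mem' := by rintro x₁ x₂ ⟨y₁, hy₁⟩ ⟨y₂, hy₂⟩; exact ⟨y₁ + y₂, by rw [smul_add, hy₁, hy₂]⟩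
  neg_mem' := by rintro x ⟨y, hy⟩; exact ⟨-y, by rw [smul_neg, hy]⟩

/-- Cocycles vanishing on a normal subgroup `I` (inflated classes). -/
def trivOnI (I : Subgroup G) : AddSubgroup (Z1 G A) where
  carrier := {f | ∀ i ∈ I, (f : G → A) i = 0}
  zero_mem' := by intro i _; rfl
  add_mem' := by
    intro f₁ f₂ h₁ h₂ i hi
    show (f₁ : G → A) i + (f₂ : G → A) i = 0
    rw [h₁ i hi, h₂ i hi, add_zero]
  neg_mem' := by
    intro f hf i hi
    show -((f : G → A) i) = 0
    rw [hf i hi, neg_zero]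

/-- The unramified classes `H¹_nr(G, A)`: the image of inflation from `G/I`, i.e. the
image in `H¹(G, A)` of the cocycles vanishing on `I`. -/
def H1nr (I : Subgroup G) : AddSubgroup (H1 G A) :=
  (trivOnI G A I).map (QuotientAddGroup.mk' _)

variable (I : Subgroup G) [I.Normal]

/-- Conjugation action of `g : G` on `1`-cocycles of a normal subgroup `I`. -/
def conjAct1 (g : G) : Z1 I A →+ Z1 I A where
  toFun f := ⟨fun i => g • (f : I → A) ⟨g⁻¹ * (i : G) * g, by
      simpa using Subgroup.Normal.conj_mem ‹I.Normal› (i : G) i.2 g⁻¹⟩, by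
    intro i j
    have hmem : ∀ x : G, x ∈ I → g⁻¹ * x * g ∈ I := fun x hx => by
      simpa using Subgroup.Normal.conj_mem ‹I.Normal› x hx g⁻¹
    have key := f.2 ⟨g⁻¹ * (i : G) * g, hmem _ i.2⟩ ⟨g⁻¹ * (j : G) * g, hmem _ j.2⟩
    have heq : (⟨g⁻¹ * (i : G) * g, hmem _ i.2⟩ * ⟨g⁻¹ * (j : G) * g, hmem _ j.2⟩ : I)
        = ⟨g⁻¹ * ((i : G) * (j : G)) * g, hmem _ (mul_mem i.2 j.2)⟩ := by
      ext
      show g⁻¹ * (i : G) * g * (g⁻¹ * (j : G) * g) = g⁻¹ * ((i : G) * (j : G)) * g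
      group
    rw [heq] at key
    show g • (f : I → A) _ = g • (f : I → A) _ + (i : G) • (g • (f : I → A) _)
    simp only [Subgroup.coe_mul]
    rw [key, smul_add]
    congr 1
    have hdef : (⟨g⁻¹ * (i : G) * g, hmem _ i.2⟩ : I) • (f : I → A) ⟨g⁻¹ * (j : G) * g, hmem _ j.2⟩
        = (g⁻¹ * (i : G) * g) • (f : I → A) ⟨g⁻¹ * (j : G) * g, hmem _ j.2⟩ := rfl
    rw [hdef, smul_smul]
    have hg : g * (g⁻¹ * (i : G) * g) = (i : G) * g := by group
    rw [hg, mul_smul]⟩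
  map_zero' := by ext i; simp
  map_add' f₁ f₂ := by ext i; simp

/-- The conjugation action of `g : G` on `H¹(I, A)`. -/
def H1conj (g : G) : H1 I A →+ H1 I A :=
  QuotientAddGroup.map _ _ (conjAct1 G A I g) (by
    rintro ⟨f, hfZ⟩ hmem
    rcases hmem with ⟨a, ha⟩
    refine ⟨g • a, fun i => ?_⟩
    have hmem' : g⁻¹ * (i : G) * g ∈ I := by
      simpa using Subgroup.Normal.conj_mem ‹I.Normal› (i : G) i.2 g⁻¹
    have h1 := ha ⟨g⁻¹ * (i : G) * g, hmem'⟩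
    try simp only [AddSubgroup.coe_subtype] at h1 ⊢
    show g • f ⟨g⁻¹ * (i : G) * g, hmem'⟩ = (i : G) • (g • a) - g • a
    have h2 : f ⟨g⁻¹ * (i : G) * g, hmem'⟩ = (g⁻¹ * (i : G) * g) • a - a := h1
    rw [h2, smul_sub, smul_smul, smul_smul]
    have hg : g * (g⁻¹ * (i : G) * g) = (i : G) * g := by group
    rw [hg, mul_smul])

/-- The `G/I`-invariants of `H¹(I, A)`. -/
def H1Iinv : AddSubgroup (H1 I A) where
  carrier := {x | ∀ g : G, H1conj G A I g x = x}
  zero_mem' := by intro g; simp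
  add_mem' := by intro x y hx hy g; rw [map_add, hx g, hy g]
  neg_mem' := by intro x hx g; rw [map_neg, hx g]

/-- Conjugation action of `g : G` on `H⁰(I, A)/p·H⁰(I, A)`. -/
def conj0 (p : ℕ) (g : G) :
    (fixedSub I A ⧸ pMulFixed I A p) →+ (fixedSub I A ⧸ pMulFixed I A p) :=
  QuotientAddGroup.map _ _
    { toFun := fun a => ⟨g • (a : A), by
        intro i
        have hmem' : g⁻¹ * (i : G) * g ∈ I := by
          simpa using Subgroup.Normal.conj_mem ‹I.Normal› (i : G) i.2 g⁻¹
        have h1 : (g⁻¹ * (i : G) * g) • (a : A) = (a : A) := a.2 ⟨_, hmem'⟩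
        show (i : G) • (g • (a : A)) = g • (a : A)
        rw [smul_smul, show (i : G) * g = g * (g⁻¹ * (i : G) * g) by group, mul_smul, h1]⟩
      map_zero' := by ext; simp
      map_add' := fun a b => by ext; simp [smul_add] } (by
    rintro x ⟨y, rfl⟩
    refine ⟨⟨g • (y : A), ?_⟩, ?_⟩
    · intro i
      have hmem' : g⁻¹ * (i : G) * g ∈ I := by
        simpa using Subgroup.Normal.conj_mem ‹I.Normal› (i : G) i.2 g⁻¹
      have h1 : (g⁻¹ * (i : G) * g) • (y : A) = (y : A) := y.2 ⟨_, hmem'⟩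
      show (i : G) • (g • (y : A)) = g • (y : A)
      rw [smul_smul, show (i : G) * g = g * (g⁻¹ * (i : G) * g) by group, mul_smul, h1]
    · ext
      show p • (g • (y : A)) = g • ((p • y : fixedSub I A) : A)
      have := (DistribMulAction.toAddMonoidHom A g).map_nsmul p (y : A)
      simpa using this.symm)

/-- The `G/I`-invariants of `H⁰(I, A)/p·H⁰(I, A)`. -/
def inv0 (p : ℕ) : AddSubgroup (fixedSub I A ⧸ pMulFixed I A p) where
  carrier := {x | ∀ g : G, conj0 G A I p g x = x}
  zero_mem' := by intro g; simp
  add_mem' := by intro x y hx hy g; rw [map_add, hx g, hy g]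
  neg_mem' := by intro x hx g; rw [map_neg, hx g]

/-- `H¹(G, A[p])` is killed by `p`, so the natural map to `H¹(G, A)` lands in the
`p`-torsion subgroup `H¹(G, A)[p]`. -/
def H1mapTors (p : ℕ) : H1 G (ptors A p) →+ (ptors (H1 G A) p) :=
  AddMonoidHom.codRestrict (H1map G ((ptors A p).subtype) (fun _ _ => rfl)) _
    (by
      intro x
      show p • (H1map G ((ptors A p).subtype) (fun _ _ => rfl)) x = 0
      rw [← map_nsmul]
      have hx : p • x = 0 := by
        refine QuotientAddGroup.induction_on x ?_
        intro f
        have hz : p • f = (0 : Z1 G (ptors A p)) := by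
          ext g
          have h3 : p • (((f : G → ptors A p) g : ptors A p) : A) = 0 :=
            ((f : G → ptors A p) g).2
          simpa using h3
        rw [← QuotientAddGroup.mk_nsmul, hz]
        rfl
      rw [hx, map_zero])

/-- The natural map `H¹(G, A[p])/H¹_nr(G, A[p]) → H¹(G, A)[p]/H¹_nr(G, A)[p]`. -/
def bigMap (p : ℕ) :
    (H1 G (ptors A p) ⧸ H1nr G (ptors A p) I) →+
      ((ptors (H1 G A) p) ⧸ (H1nr G A I).addSubgroupOf (ptors (H1 G A) p)) :=
  QuotientAddGroup.map _ _ (H1mapTors G A p) (by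
    intro x hx
    rcases AddSubgroup.mem_map.mp hx with ⟨f, hf, rfl⟩
    rw [AddSubgroup.mem_comap, AddSubgroup.mem_addSubgroupOf]
    refine AddSubgroup.mem_map.mpr ⟨Z1map G ((ptors A p).subtype) (fun _ _ => rfl) f, ?_, ?_⟩
    · intro i hi
      show ((ptors A p).subtype) ((f : G → ptors A p) i) = 0
      have h0 : (f : G → ptors A p) i = 0 := hf i hi
      rw [h0, map_zero]
    · rfl)

/-- The kernel of `H¹(I, A[p])^{G/I} → H¹(I, A)^{G/I}[p]`: invariant classes in
`H¹(I, A[p])` mapping to zero in `H¹(I, A)`. -/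
def midKer (p : ℕ) : AddSubgroup (H1 I (ptors A p)) :=
  H1Iinv G (ptors A p) I ⊓
    AddMonoidHom.ker (H1map I ((ptors A p).subtype) (fun _ _ => rfl))

end

section Aux

variable (G : Type*) [Group G] (A : Type*) [AddCommGroup A] [DistribMulAction G A]

theorem Z1_apply_one (f : Z1 G A) : (f : G → A) 1 = 0 := by
  have h := f.2 1 1
  rw [mul_one, one_smul] at h
  exact (left_eq_add.mp h)

theorem Z1_inv (f : Z1 G A) (g : G) : g • (f : G → A) g⁻¹ = - (f : G → A) g := by
  have h := f.2 g g⁻¹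
  rw [mul_inv_cancel, Z1_apply_one] at h
  exact eq_neg_of_add_eq_zero_left (by rw [add_comm]; exact h.symm)

/-- The coboundary cocycle attached to `a : A`. -/
def cob (a : A) : Z1 G A :=
  ⟨fun g => g • a - a, by
    intro g h
    simp only [mul_smul, smul_sub]
    abel⟩

variable (I : Subgroup G) [I.Normal]

/-- Restriction of cocycles from `G` to `I`. -/
def resZ : Z1 G A →+ Z1 I A where
  toFun f := ⟨fun i => (f : G → A) i, by
    intro i j
    show (f : G → A) ((i * j : I) : G) = (f : G → A) i + (i : G) • (f : G → A) j
    rw [Subgroup.coe_mul]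
    exact f.2 (i : G) (j : G)⟩
  map_zero' := rfl
  map_add' _ _ := rfl

/-- Restriction on `H¹`. -/
def H1res : H1 G A →+ H1 I A :=
  QuotientAddGroup.map _ _ (resZ G A I) (by
    intro f hf
    rw [AddSubgroup.mem_addSubgroupOf] at hf
    rw [AddSubgroup.mem_comap, AddSubgroup.mem_addSubgroupOf]
    rcases hf with ⟨a, ha⟩
    exact ⟨a, fun i => ha (i : G)⟩)

theorem conj_resZ (f : Z1 G A) (g : G) (i : I) :
    (conjAct1 G A I g (resZ G A I f) : I → A) i
      = (f : G → A) i + (i : G) • (f : G → A) g - (f : G → A) g := by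
  show g • (f : G → A) (g⁻¹ * (i : G) * g) = _
  have h1 := f.2 g⁻¹ ((i : G) * g)
  rw [← mul_assoc] at h1
  have h2 := f.2 (i : G) g
  rw [h1, h2, smul_add, smul_smul, mul_inv_cancel, one_smul, Z1_inv]
  abel

theorem H1res_inv (x : H1 G A) : H1res G A I x ∈ H1Iinv G A I := by
  refine QuotientAddGroup.induction_on x ?_
  intro f g
  have e1 : H1res G A I (QuotientAddGroup.mk f) = QuotientAddGroup.mk (resZ G A I f) := rfl
  have e2 : H1conj G A I g (QuotientAddGroup.mk (resZ G A I f))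
      = QuotientAddGroup.mk (conjAct1 G A I g (resZ G A I f)) := rfl
  show H1conj G A I g (H1res G A I (QuotientAddGroup.mk f)) = _
  rw [e1, e2, QuotientAddGroup.eq, AddSubgroup.mem_addSubgroupOf]
  refine ⟨-((f : G → A) g), fun i => ?_⟩
  show -((conjAct1 G A I g (resZ G A I f) : I → A) i) + (f : G → A) i
      = (i : G) • (-((f : G → A) g)) - (-((f : G → A) g))
  rw [conj_resZ, smul_neg]
  abel

end Aux

section Aux2

variable (G : Type*) [Group G] (A : Type*) [AddCommGroup A] [DistribMulAction G A]
variable (I : Subgroup G) [I.Normal] (p : ℕ)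

/-- The map `H¹(G,A[p])/H¹_nr → H¹(I,A[p])` induced by restriction. -/
def Jbig : (H1 G (ptors A p) ⧸ H1nr G (ptors A p) I) →+ H1 I (ptors A p) :=
  QuotientAddGroup.lift _ (H1res G (ptors A p) I) (by
    intro x hx
    rcases AddSubgroup.mem_map.mp hx with ⟨F, hF, rfl⟩
    have hz : resZ G (ptors A p) I F = 0 :=
      Subtype.ext (funext fun i => hF (i : G) i.2)
    show H1res G (ptors A p) I (QuotientAddGroup.mk F) = 0
    have e1 : H1res G (ptors A p) I (QuotientAddGroup.mk F)
        = QuotientAddGroup.mk (resZ G (ptors A p) I F) := rfl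
    rw [e1, hz]
    rfl)

theorem jmem (x : H1 G (ptors A p) ⧸ H1nr G (ptors A p) I)
    (hx : x ∈ AddMonoidHom.ker (bigMap G A I p)) :
    Jbig G A I p x ∈ midKer G A I p := by
  revert hx
  refine QuotientAddGroup.induction_on x ?_
  intro y
  refine QuotientAddGroup.induction_on y ?_
  intro f hf
  have e0 : Jbig G A I p (QuotientAddGroup.mk (QuotientAddGroup.mk f))
      = QuotientAddGroup.mk (resZ G (ptors A p) I f) := rfl
  rw [e0]
  constructor
  · exact H1res_inv G (ptors A p) I (QuotientAddGroup.mk f)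
  · -- extract the coboundary datum from hf
    rw [AddMonoidHom.mem_ker] at hf
    have hf' : QuotientAddGroup.mk (Z1map G ((ptors A p).subtype) (fun _ _ => rfl) f)
        ∈ H1nr G A I := by
      have e1 : bigMap G A I p (QuotientAddGroup.mk (QuotientAddGroup.mk f))
          = QuotientAddGroup.mk (H1mapTors G A p (QuotientAddGroup.mk f)) := rfl
      rw [e1, QuotientAddGroup.eq_zero_iff, AddSubgroup.mem_addSubgroupOf] at hf
      exact hf
    rcases AddSubgroup.mem_map.mp hf' with ⟨F, hF, hFeq⟩
    have hFeq' : (QuotientAddGroup.mk F : H1 G A)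
        = QuotientAddGroup.mk (Z1map G ((ptors A p).subtype) (fun _ _ => rfl) f) := hFeq
    rw [QuotientAddGroup.eq, AddSubgroup.mem_addSubgroupOf] at hFeq'
    rcases hFeq' with ⟨a, ha⟩
    show H1map I ((ptors A p).subtype) (fun _ _ => rfl)
        (QuotientAddGroup.mk (resZ G (ptors A p) I f)) = 0
    have e2 : H1map I ((ptors A p).subtype) (fun _ _ => rfl)
        (QuotientAddGroup.mk (resZ G (ptors A p) I f))
        = QuotientAddGroup.mk (Z1map I ((ptors A p).subtype) (fun _ _ => rfl)
            (resZ G (ptors A p) I f)) := rfl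
    rw [e2, QuotientAddGroup.eq_zero_iff, AddSubgroup.mem_addSubgroupOf]
    refine ⟨a, fun i => ?_⟩
    have h3 := ha (i : G)
    have h4 : (F : G → A) (i : G) = 0 := hF (i : G) i.2
    have h5 : -(F : G → A) (i : G) + (((f : G → ptors A p) (i : G) : A)) = (i : G) • a - a := h3
    rw [h4, neg_zero, zero_add] at h5
    exact h5

end Aux2

section Aux3

variable (G : Type*) [Group G] (A : Type*) [AddCommGroup A] [DistribMulAction G A]
variable (I : Subgroup G) [I.Normal] (p : ℕ)

/-- The injection `ker(bigMap) →+ midKer`. -/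
def jmap : (AddMonoidHom.ker (bigMap G A I p)) →+ (midKer G A I p) :=
  AddMonoidHom.codRestrict
    ((Jbig G A I p).comp (AddMonoidHom.ker (bigMap G A I p)).subtype) _
    (fun x => jmem G A I p x.1 x.2)

theorem jmap_inj : Function.Injective (jmap G A I p) := by
  rw [injective_iff_map_eq_zero]
  rintro ⟨x, hx⟩ h
  have h' : Jbig G A I p x = 0 := congrArg Subtype.val h
  refine Subtype.ext ?_
  show x = 0
  clear hx h
  revert h'
  refine QuotientAddGroup.induction_on x ?_
  intro y
  refine QuotientAddGroup.induction_on y ?_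
  intro f h'
  have e0 : Jbig G A I p (QuotientAddGroup.mk (QuotientAddGroup.mk f))
      = QuotientAddGroup.mk (resZ G (ptors A p) I f) := rfl
  rw [e0, QuotientAddGroup.eq_zero_iff, AddSubgroup.mem_addSubgroupOf] at h'
  rcases h' with ⟨a, ha⟩
  show (QuotientAddGroup.mk (QuotientAddGroup.mk f) :
      H1 G (ptors A p) ⧸ H1nr G (ptors A p) I) = 0
  rw [QuotientAddGroup.eq_zero_iff]
  refine AddSubgroup.mem_map.mpr ⟨f - cob G (ptors A p) a, ?_, ?_⟩
  · intro i hi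
    have h1 : (f : G → ptors A p) i = i • a - a := ha ⟨i, hi⟩
    show (f : G → ptors A p) i - (i • a - a) = 0
    rw [h1, sub_self]
  · show (QuotientAddGroup.mk (f - cob G (ptors A p) a) : H1 G (ptors A p))
        = QuotientAddGroup.mk f
    rw [QuotientAddGroup.eq, AddSubgroup.mem_addSubgroupOf]
    refine ⟨a, fun g => ?_⟩
    show -((f : G → ptors A p) g - (g • a - a)) + (f : G → ptors A p) g = g • a - a
    abel

end Aux3

section Aux4

variable (G : Type*) [Group G] (A : Type*) [AddCommGroup A] [DistribMulAction G A]
variable (I : Subgroup G) [I.Normal] (p : ℕ)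

/-- The Kummer cocycle attached to `c ∈ A^I` and `b` with `p • b = c`. -/
def kZ (c : fixedSub I A) (b : A) (hb : p • b = (c : A)) : Z1 I (ptors A p) :=
  ⟨fun i => ⟨(i : G) • b - b, by
      show p • ((i : G) • b - b) = 0
      have hc : (i : G) • (c : A) = (c : A) := c.2 i
      have hn : (i : G) • (p • b) = p • ((i : G) • b) :=
        (DistribMulAction.toAddMonoidHom A ((i : G))).map_nsmul p b
      rw [smul_sub, ← hn, hb, hc, sub_self]⟩, by
    intro i j
    apply Subtype.ext
    show ((i * j : I) : G) • b - b = (((i : G) • b - b) + (i : G) • ((j : G) • b - b))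
    rw [Subgroup.coe_mul, mul_smul, smul_sub]
    abel⟩

theorem kZ_indep (c : fixedSub I A) (b b' : A) (hb : p • b = (c : A))
    (hb' : p • b' = (c : A)) :
    (QuotientAddGroup.mk (kZ G A I p c b hb) : H1 I (ptors A p))
      = QuotientAddGroup.mk (kZ G A I p c b' hb') := by
  rw [QuotientAddGroup.eq, AddSubgroup.mem_addSubgroupOf]
  refine ⟨⟨b' - b, ?_⟩, fun i => ?_⟩
  · show p • (b' - b) = 0
    rw [smul_sub, hb, hb', sub_self]
  · apply Subtype.ext
    show -((i : G) • b - b) + ((i : G) • b' - b') = (i : G) • (b' - b) - (b' - b)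
    rw [smul_sub]
    abel

/-- The connecting map `A^I → H¹(I, A[p])`. -/
noncomputable def delta (hdiv : ∀ a : A, ∃ b : A, p • b = a) :
    fixedSub I A →+ H1 I (ptors A p) where
  toFun c := QuotientAddGroup.mk (kZ G A I p c (hdiv (c : A)).choose (hdiv (c : A)).choose_spec)
  map_zero' := by
    show (QuotientAddGroup.mk (kZ G A I p 0 (hdiv ((0 : fixedSub I A) : A)).choose
        (hdiv ((0 : fixedSub I A) : A)).choose_spec) : H1 I (ptors A p)) = 0
    rw [kZ_indep G A I p 0 _ 0 (hdiv ((0 : fixedSub I A) : A)).choose_spec (by simp)]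
    have hz : kZ G A I p 0 0 (by simp) = 0 := by
      apply Subtype.ext
      funext i
      apply Subtype.ext
      show (i : G) • (0 : A) - 0 = 0
      simp
    rw [hz]
    rfl
  map_add' c c' := by
    have hb := (hdiv (c : A)).choose_spec
    have hb' := (hdiv (c' : A)).choose_spec
    have hsum : p • ((hdiv (c : A)).choose + (hdiv (c' : A)).choose)
        = ((c + c' : fixedSub I A) : A) := by
      rw [smul_add, hb, hb']; rfl
    show (QuotientAddGroup.mk (kZ G A I p (c + c') (hdiv ((c + c' : fixedSub I A) : A)).choose
          (hdiv ((c + c' : fixedSub I A) : A)).choose_spec) : H1 I (ptors A p))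
        = QuotientAddGroup.mk (kZ G A I p c (hdiv (c : A)).choose hb)
          + QuotientAddGroup.mk (kZ G A I p c' (hdiv (c' : A)).choose hb')
    rw [kZ_indep G A I p (c + c') _ ((hdiv (c : A)).choose + (hdiv (c' : A)).choose)
      (hdiv ((c + c' : fixedSub I A) : A)).choose_spec hsum]
    have hadd : kZ G A I p (c + c') ((hdiv (c : A)).choose + (hdiv (c' : A)).choose) hsum
        = kZ G A I p c (hdiv (c : A)).choose hb + kZ G A I p c' (hdiv (c' : A)).choose hb' := by
      apply Subtype.ext
      funext i
      apply Subtype.ext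
      show (i : G) • ((hdiv (c : A)).choose + (hdiv (c' : A)).choose)
            - ((hdiv (c : A)).choose + (hdiv (c' : A)).choose)
          = ((i : G) • (hdiv (c : A)).choose - (hdiv (c : A)).choose)
            + ((i : G) • (hdiv (c' : A)).choose - (hdiv (c' : A)).choose)
      rw [smul_add]
      abel
    rw [hadd]
    rfl

variable (hdiv : ∀ a : A, ∃ b : A, p • b = a)

theorem delta_mk (c : fixedSub I A) (b : A) (hb : p • b = (c : A)) :
    delta G A I p hdiv c = QuotientAddGroup.mk (kZ G A I p c b hb) :=
  kZ_indep G A I p c _ b (hdiv (c : A)).choose_spec hb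

theorem delta_pmul (x : fixedSub I A) (hx : x ∈ pMulFixed I A p) :
    delta G A I p hdiv x = 0 := by
  rcases hx with ⟨y, rfl⟩
  have hb : p • ((y : fixedSub I A) : A) = ((p • y : fixedSub I A) : A) := by
    simp
  rw [delta_mk G A I p hdiv _ _ hb]
  have hz : kZ G A I p (p • y) (y : A) hb = 0 := by
    apply Subtype.ext
    funext i
    apply Subtype.ext
    show (i : I) • (y : A) - (y : A) = 0
    rw [y.2 i, sub_self]
  rw [hz]
  rfl

/-- The induced map `A^I/pA^I → H¹(I, A[p])`. -/
noncomputable def deltaBar : (fixedSub I A ⧸ pMulFixed I A p) →+ H1 I (ptors A p) :=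
  QuotientAddGroup.lift _ (delta G A I p hdiv) (delta_pmul G A I p hdiv)

theorem deltaBar_inj : Function.Injective (deltaBar G A I p hdiv) := by
  rw [injective_iff_map_eq_zero]
  intro x
  refine QuotientAddGroup.induction_on x ?_
  intro c h
  have h' : delta G A I p hdiv c = 0 := h
  set b := (hdiv (c : A)).choose with hbdef
  have hb : p • b = (c : A) := (hdiv (c : A)).choose_spec
  rw [delta_mk G A I p hdiv c b hb, QuotientAddGroup.eq_zero_iff,
    AddSubgroup.mem_addSubgroupOf] at h'
  rcases h' with ⟨t, ht⟩
  have hfix : b - (t : A) ∈ fixedSub I A := by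
    intro i
    have h1 : (i : G) • b - b = (i : G) • (t : A) - (t : A) := congrArg Subtype.val (ht i)
    show (i : G) • (b - (t : A)) = b - (t : A)
    rw [smul_sub]
    exact sub_eq_sub_iff_sub_eq_sub.mp h1
  have hpt : p • (t : A) = 0 := t.2
  have hcoe : ((p • (⟨b - (t : A), hfix⟩ : fixedSub I A) : fixedSub I A) : A)
      = p • (b - (t : A)) := by simp
  have hp : p • (⟨b - (t : A), hfix⟩ : fixedSub I A) = c := by
    apply Subtype.ext
    rw [hcoe, smul_sub, hb, hpt, sub_zero]
  show (QuotientAddGroup.mk c : fixedSub I A ⧸ pMulFixed I A p) = 0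
  rw [QuotientAddGroup.eq_zero_iff]
  exact ⟨⟨b - (t : A), hfix⟩, hp⟩

end Aux4

section Aux5

variable (G : Type*) [Group G] (A : Type*) [AddCommGroup A] [DistribMulAction G A]
variable (I : Subgroup G) [I.Normal] (p : ℕ) (hdiv : ∀ a : A, ∃ b : A, p • b = a)

theorem deltaBar_conj (g : G) (x : fixedSub I A ⧸ pMulFixed I A p) :
    H1conj G (ptors A p) I g (deltaBar G A I p hdiv x)
      = deltaBar G A I p hdiv (conj0 G A I p g x) := by
  refine QuotientAddGroup.induction_on x ?_
  intro c
  have hb : p • (hdiv (c : A)).choose = (c : A) := (hdiv (c : A)).choose_spec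
  set b := (hdiv (c : A)).choose with hbdef
  have hcg : ∀ i : I, (i : I) • (g • (c : A)) = g • (c : A) := by
    intro i
    have hmem' : g⁻¹ * (i : G) * g ∈ I := by
      simpa using Subgroup.Normal.conj_mem ‹I.Normal› (i : G) i.2 g⁻¹
    have h1 : (g⁻¹ * (i : G) * g) • (c : A) = (c : A) := c.2 ⟨_, hmem'⟩
    show (i : G) • g • (c : A) = g • (c : A)
    rw [smul_smul, show (i : G) * g = g * (g⁻¹ * (i : G) * g) by group, mul_smul, h1]
  have hbg : p • (g • b) = ((⟨g • (c : A), hcg⟩ : fixedSub I A) : A) := by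
    have hn : g • (p • b) = p • (g • b) := (DistribMulAction.toAddMonoidHom A g).map_nsmul p b
    show p • (g • b) = g • (c : A)
    rw [← hn, hb]
  show H1conj G (ptors A p) I g (deltaBar G A I p hdiv (QuotientAddGroup.mk c))
      = deltaBar G A I p hdiv (conj0 G A I p g (QuotientAddGroup.mk c))
  have e1 : deltaBar G A I p hdiv (QuotientAddGroup.mk c)
      = QuotientAddGroup.mk (kZ G A I p c b hb) := delta_mk G A I p hdiv c b hb
  have e2 : conj0 G A I p g (QuotientAddGroup.mk c)
      = QuotientAddGroup.mk (⟨g • (c : A), hcg⟩ : fixedSub I A) := rfl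
  have e3 : deltaBar G A I p hdiv (QuotientAddGroup.mk (⟨g • (c : A), hcg⟩ : fixedSub I A))
      = QuotientAddGroup.mk (kZ G A I p ⟨g • (c : A), hcg⟩ (g • b) hbg) :=
    delta_mk G A I p hdiv _ (g • b) hbg
  have e4 : H1conj G (ptors A p) I g (QuotientAddGroup.mk (kZ G A I p c b hb))
      = QuotientAddGroup.mk (conjAct1 G (ptors A p) I g (kZ G A I p c b hb)) := rfl
  rw [e1, e2, e3, e4]
  congr 1
  apply Subtype.ext
  funext i
  apply Subtype.ext
  show g • ((g⁻¹ * (i : G) * g) • b - b) = (i : G) • (g • b) - g • b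
  rw [smul_sub, smul_smul, show g * (g⁻¹ * (i : G) * g) = (i : G) * g by group, mul_smul]

theorem deltaBar_ker (x : fixedSub I A ⧸ pMulFixed I A p) :
    H1map I ((ptors A p).subtype) (fun _ _ => rfl) (deltaBar G A I p hdiv x) = 0 := by
  refine QuotientAddGroup.induction_on x ?_
  intro c
  have hb : p • (hdiv (c : A)).choose = (c : A) := (hdiv (c : A)).choose_spec
  set b := (hdiv (c : A)).choose with hbdef
  have e1 : deltaBar G A I p hdiv (QuotientAddGroup.mk c)
      = QuotientAddGroup.mk (kZ G A I p c b hb) := delta_mk G A I p hdiv c b hb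
  show H1map I ((ptors A p).subtype) (fun _ _ => rfl)
      (deltaBar G A I p hdiv (QuotientAddGroup.mk c)) = 0
  rw [e1]
  have e2 : H1map I ((ptors A p).subtype) (fun _ _ => rfl)
      (QuotientAddGroup.mk (kZ G A I p c b hb))
      = QuotientAddGroup.mk (Z1map I ((ptors A p).subtype) (fun _ _ => rfl)
          (kZ G A I p c b hb)) := rfl
  rw [e2, QuotientAddGroup.eq_zero_iff, AddSubgroup.mem_addSubgroupOf]
  exact ⟨b, fun i => rfl⟩

/-- The map `(A^I/pA^I)^{G/I} →+ midKer`. -/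
noncomputable def emap : (inv0 G A I p) →+ (midKer G A I p) :=
  AddMonoidHom.codRestrict ((deltaBar G A I p hdiv).comp (inv0 G A I p).subtype) _ (by
    rintro ⟨x, hx⟩
    show deltaBar G A I p hdiv x ∈ midKer G A I p
    constructor
    · intro g
      rw [deltaBar_conj G A I p hdiv g x, hx g]
    · show H1map I ((ptors A p).subtype) (fun _ _ => rfl) (deltaBar G A I p hdiv x) = 0
      exact deltaBar_ker G A I p hdiv x)

theorem emap_inj : Function.Injective (emap G A I p hdiv) := by
  rw [injective_iff_map_eq_zero]
  rintro ⟨x, hx⟩ h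
  have h' : deltaBar G A I p hdiv x = 0 := congrArg Subtype.val h
  exact Subtype.ext (deltaBar_inj G A I p hdiv (h'.trans (map_zero _).symm))

theorem emap_surj : Function.Surjective (emap G A I p hdiv) := by
  rintro ⟨y, hy⟩
  obtain ⟨hy1, hy2⟩ := AddSubgroup.mem_inf.mp hy
  obtain ⟨f, rfl⟩ := QuotientAddGroup.mk'_surjective ((B1 I (ptors A p)).addSubgroupOf
    (Z1 I (ptors A p))) y
  have hy2' : (QuotientAddGroup.mk (Z1map I ((ptors A p).subtype) (fun _ _ => rfl) f) :
      H1 I A) = 0 := hy2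
  rw [QuotientAddGroup.eq_zero_iff, AddSubgroup.mem_addSubgroupOf] at hy2'
  rcases hy2' with ⟨a, ha⟩
  have ha' : ∀ i : I, ((f : I → ptors A p) i : A) = (i : G) • a - a := fun i => ha i
  have hfix : ∀ i : I, (i : I) • (p • a) = p • a := by
    intro i
    have hn : (i : G) • (p • a) = p • ((i : G) • a) :=
      (DistribMulAction.toAddMonoidHom A ((i : G))).map_nsmul p a
    have hia : (i : G) • a = ((f : I → ptors A p) i : A) + a :=
      sub_eq_iff_eq_add.mp (ha' i).symm
    have hpf : p • ((f : I → ptors A p) i : A) = 0 := ((f : I → ptors A p) i).2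
    show (i : G) • (p • a) = p • a
    rw [hn, hia, smul_add, hpf, zero_add]
  have hkf : kZ G A I p ⟨p • a, hfix⟩ a rfl = f := by
    apply Subtype.ext
    funext i
    apply Subtype.ext
    exact (ha' i).symm
  have hdel : deltaBar G A I p hdiv (QuotientAddGroup.mk (⟨p • a, hfix⟩ : fixedSub I A))
      = QuotientAddGroup.mk (kZ G A I p ⟨p • a, hfix⟩ a rfl) :=
    delta_mk G A I p hdiv ⟨p • a, hfix⟩ a rfl
  rw [hkf] at hdel
  have hinv0 : (QuotientAddGroup.mk (⟨p • a, hfix⟩ : fixedSub I A) :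
      fixedSub I A ⧸ pMulFixed I A p) ∈ inv0 G A I p := by
    intro g
    apply deltaBar_inj G A I p hdiv
    rw [← deltaBar_conj G A I p hdiv g, hdel]
    exact hy1 g
  refine ⟨⟨QuotientAddGroup.mk (⟨p • a, hfix⟩ : fixedSub I A), hinv0⟩, ?_⟩
  exact Subtype.ext hdel

end Aux5
/-- For `I ⊴ G` and a `G`-module `A` with multiplication by `p` surjective,
the kernel of the natural map
`H¹(G, A[p])/H¹_nr(G, A[p]) → H¹(G, A)[p]/H¹_nr(G, A)[p]`
injects into `ker(H¹(I, A[p])^{G/I} → H¹(I, A)^{G/I}[p])`, which is isomorphic to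
`(H⁰(I, A)/p·H⁰(I, A))^{G/I}`. -/
theorem stmt15 (G : Type*) [Group G] (A : Type*) [AddCommGroup A] [DistribMulAction G A]
    (I : Subgroup G) [I.Normal] (p : ℕ) (hdiv : ∀ a : A, ∃ b : A, p • b = a) :
    (∃ j : (AddMonoidHom.ker (bigMap G A I p)) →+ (midKer G A I p),
      Function.Injective j) ∧
    Nonempty ((midKer G A I p) ≃+ (inv0 G A I p)) := by
  refine ⟨⟨jmap G A I p, jmap_inj G A I p⟩, ?_⟩
  exact ⟨(AddEquiv.ofBijective (emap G A I p hdiv)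
    ⟨emap_inj G A I p hdiv, emap_surj G A I p hdiv⟩).symm⟩
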